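/- Let λ = e^{iθ} with θ an irrational multiple of 2π (so λ is not a root of unity). Then there exist formal power series q(t) = Σ_{k≥0} q_{2k} t^{2k} with q₀ = 1, and φ(z,z̄) = Σ_{n≥0} Σ_{j+k=2n+1} φ_{j,k} z^j z̄^k with φ_{j,k} = φ_{k,j} and φ = z + z̄ + O₃, solving ℰ(q,φ) = 0 as formal power series in z, z̄. -/

import Mathlib

/- Common setup: formal power series in two commuting variables `z, z̄` over `ℂ`,
represented by their coefficient functions, together with the operators of
Treschev's linearizable billiard construction. -/

open scoped BigOperators

noncomputable section

namespace Treschev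

/-- A formal power series `f = Σ_{j,k≥0} f_{j,k} z^j z̄^k`, given by its coefficients. -/
abbrev FPS : Type := ℕ → ℕ → ℂ

/-- A formal power series in one variable `t`, given by its coefficients. -/
abbrev OPS : Type := ℕ → ℂ

/-- Product of two formal power series (Cauchy product). -/
def fmul (f g : FPS) : FPS := fun j k =>
  ∑ a ∈ Finset.range (j + 1), ∑ b ∈ Finset.range (k + 1), f a b * g (j - a) (k - b)

/-- The constant series `1`. -/
def oneF : FPS := fun j k => if j = 0 ∧ k = 0 then 1 else 0

/-- Powers of a formal power series. -/
def fpow (f : FPS) : ℕ → FPS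
  | 0 => oneF
  | n + 1 => fmul f (fpow f n)

/-- Substitution of a two-variable series `u` with zero constant term into a
one-variable series `q` (the formula is the correct one whenever `u 0 0 = 0`). -/
def substOne (q : OPS) (u : FPS) : FPS := fun j k =>
  ∑ m ∈ Finset.range (j + k + 1), q m * fpow u m j k

/-- Substitution `F(u, v)` of two series with zero constant term into a two-variable
series `F` (the formula is the correct one whenever `u 0 0 = 0` and `v 0 0 = 0`). -/
def subst2 (F : FPS) (u v : FPS) : FPS := fun j k =>
  ∑ m ∈ Finset.range (j + k + 1), ∑ n ∈ Finset.range (j + k + 1),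
    F m n * fmul (fpow u m) (fpow v n) j k

/-- The Taylor series of `cos`. -/
def cosSeries : OPS := fun n => if n % 2 = 0 then (-1 : ℂ) ^ (n / 2) / (n.factorial : ℂ) else 0

/-- `(t₁ + t₂)/2` as a two-variable series. -/
def halfSum : FPS := fun j k =>
  if j = 1 ∧ k = 0 then (1 / 2 : ℂ) else if j = 0 ∧ k = 1 then (1 / 2 : ℂ) else 0

/-- `(t₁ − t₂)/2` as a two-variable series. -/
def halfDiff : FPS := fun j k =>
  if j = 1 ∧ k = 0 then (1 / 2 : ℂ) else if j = 0 ∧ k = 1 then (-(1 / 2) : ℂ) else 0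

/-- The generating function `S_q(t₁,t₂) = q((t₁+t₂)/2)·cos((t₁−t₂)/2)` as a
formal power series in `t₁, t₂`. -/
def Sq (q : OPS) : FPS := fmul (substOne q halfSum) (substOne cosSeries halfDiff)

/-- Formal partial derivative with respect to the first variable. -/
def d1 (f : FPS) : FPS := fun j k => ((j + 1 : ℕ) : ℂ) * f (j + 1) k

/-- Formal partial derivative with respect to the second variable. -/
def d2 (f : FPS) : FPS := fun j k => ((k + 1 : ℕ) : ℂ) * f j (k + 1)

/-- `f⁺`, with `(f⁺)_{j,k} = λ^{j−k} f_{j,k}`. -/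
def plus (l : ℂ) (f : FPS) : FPS := fun j k => l ^ ((j : ℤ) - (k : ℤ)) * f j k

/-- `f⁻`, with `(f⁻)_{j,k} = λ^{k−j} f_{j,k}`. -/
def minus (l : ℂ) (f : FPS) : FPS := fun j k => l ^ ((k : ℤ) - (j : ℤ)) * f j k

/-- `∇f = f⁻ − λ⁻¹ f`. -/
def nab (l : ℂ) (f : FPS) : FPS := minus l f - l⁻¹ • f

/-- `∇⁺f = f − λ f⁺`. -/
def nabPlus (l : ℂ) (f : FPS) : FPS := f - l • plus l f

/-- The average `[f] = Σ_j f_{j,j} (z z̄)^j`. -/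
def avg (f : FPS) : FPS := fun j k => if j = k then f j k else 0

/-- The projection `Π₊(f) = [z f]/z`. -/
def Pip (f : FPS) : FPS := fun j k => if k = j + 1 then f j k else 0

/-- The projection `Π(f) = [z̄ f]/z̄`. -/
def Pim (f : FPS) : FPS := fun j k => if j = k + 1 then f j k else 0

/-- `E⁺`, the partial inverse of `∇⁺`. -/
def Eplus (l : ℂ) (f : FPS) : FPS := fun j k =>
  if k = j + 1 then 0 else f j k / (1 - l ^ ((j : ℤ) - (k : ℤ) + 1))

/-- `E`, the partial inverse of `∇`. -/
def Emin (l : ℂ) (f : FPS) : FPS := fun j k =>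
  if j = k + 1 then 0 else f j k / (l ^ ((k : ℤ) - (j : ℤ)) - l⁻¹)

/-- `Ẽ`, with `Ẽ(f − f⁺) = f − [f]`. -/
def Etilde (l : ℂ) (f : FPS) : FPS := fun j k =>
  if j = k then 0 else f j k / (1 - l ^ ((j : ℤ) - (k : ℤ)))

/-- `f ∘ I`, where `I(z,z̄) = (z̄,z)`. -/
def swapI (f : FPS) : FPS := fun j k => f k j

/-- Multiplication by `z`. -/
def mulz (f : FPS) : FPS := fun j k => if j = 0 then 0 else f (j - 1) k

/-- Multiplication by `z̄`. -/
def mulzbar (f : FPS) : FPS := fun j k => if k = 0 then 0 else f j (k - 1)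

/-- Division by `z` (valid on series divisible by `z`). -/
def divz (f : FPS) : FPS := fun j k => f (j + 1) k

/-- Multiplicative inverse `1/h` (the geometric-series formula, which is the correct
inverse whenever `h 0 0 ≠ 0`). -/
def finv (h : FPS) : FPS := fun j k =>
  (h 0 0)⁻¹ * ∑ m ∈ Finset.range (j + k + 1),
    fpow (fun a b => if a = 0 ∧ b = 0 then 0 else -(h a b) * (h 0 0)⁻¹) m j k

/-- Quotient `f/h` of formal power series. -/
def fdiv (f h : FPS) : FPS := fmul f (finv h)

/-- `ℰ(q,φ) = ∂₂S_q(φ⁻,φ) + ∂₁S_q(φ,φ⁺)`. -/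
def Err (l : ℂ) (q : OPS) (φ : FPS) : FPS :=
  subst2 (d2 (Sq q)) (minus l φ) φ + subst2 (d1 (Sq q)) φ (plus l φ)

/-- `∂_φℰ(q,φ)(w) = ∂₁₂S_q(φ⁻,φ)w⁻ + ∂₂₂S_q(φ⁻,φ)w + ∂₁₁S_q(φ,φ⁺)w + ∂₁₂S_q(φ,φ⁺)w⁺`. -/
def dErr (l : ℂ) (q : OPS) (φ : FPS) (w : FPS) : FPS :=
  fmul (subst2 (d1 (d2 (Sq q))) (minus l φ) φ) (minus l w)
    + fmul (subst2 (d2 (d2 (Sq q))) (minus l φ) φ) w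
    + fmul (subst2 (d1 (d1 (Sq q))) φ (plus l φ)) w
    + fmul (subst2 (d1 (d2 (Sq q))) φ (plus l φ)) (plus l w)

/-- `h = ∂₁₂S_q(φ⁻,φ)·φ_z·φ_z⁻`. -/
def hFun (l : ℂ) (q : OPS) (φ : FPS) : FPS :=
  fmul (fmul (subst2 (d1 (d2 (Sq q))) (minus l φ) φ) (d1 φ)) (minus l (d1 φ))

/-- `ψ = −E⁺( ℰ(q,φ)·φ_z − Π₊(ℰ(q,φ)·φ_z) )`. -/
def psiFun (l : ℂ) (q : OPS) (φ : FPS) : FPS :=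
  -Eplus l (fmul (Err l q φ) (d1 φ) - Pip (fmul (Err l q φ) (d1 φ)))

/-- `w = φ_z·E( ψ/h − Π(ψ/h) )`. -/
def wFun (l : ℂ) (q : OPS) (φ : FPS) : FPS :=
  fmul (d1 φ)
    (Emin l (fdiv (psiFun l q φ) (hFun l q φ) - Pim (fdiv (psiFun l q φ) (hFun l q φ))))

/-- `κ = ∂₁₂S_q(φ⁻,φ)·(λ⁻¹ φ_z⁻ φ_z̄ − λ φ_z̄⁻ φ_z)`. -/
def kappaFun (l : ℂ) (q : OPS) (φ : FPS) : FPS :=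
  fmul (subst2 (d1 (d2 (Sq q))) (minus l φ) φ)
    (l⁻¹ • fmul (minus l (d1 φ)) (d2 φ) - l • fmul (minus l (d2 φ)) (d1 φ))

/-- `g = φ_z̄ / φ_z`. -/
def gFun (φ : FPS) : FPS := fdiv (d2 φ) (d1 φ)

/-- `R₁ = ( −[z̄·ℰ·φ_z̄] + [z̄·g·[z·ℰ·φ_z]/z] ) / ( λ·z·[κ] )`. -/
def R1Fun (l : ℂ) (q : OPS) (φ : FPS) : FPS :=
  l⁻¹ • fmul (finv (avg (kappaFun l q φ)))
    (divz (-avg (mulzbar (fmul (Err l q φ) (d2 φ)))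
      + avg (mulzbar (fmul (gFun φ) (divz (avg (mulz (fmul (Err l q φ) (d1 φ)))))))))

/-- `R₂ = (1/z)·[ z̄·ψ·(λ⁻¹g − λg⁻)·([κ]−κ)/(κ·[κ]) ]`. -/
def R2Fun (l : ℂ) (q : OPS) (φ : FPS) : FPS :=
  divz (avg (mulzbar
    (fmul (fmul (psiFun l q φ) (l⁻¹ • gFun φ - l • minus l (gFun φ)))
      (fmul (avg (kappaFun l q φ) - kappaFun l q φ)
        (finv (fmul (kappaFun l q φ) (avg (kappaFun l q φ))))))))

/-- `R₃ = [z·∂_z(S_q(φ⁻,φ))]/z − ∇⁺( h·Π(ψ/h) )`. -/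
def R3Fun (l : ℂ) (q : OPS) (φ : FPS) : FPS :=
  Pip (d1 (subst2 (Sq q) (minus l φ) φ))
    - nabPlus l (fmul (hFun l q φ) (Pim (fdiv (psiFun l q φ) (hFun l q φ))))

/-- `R₄ = ∂_z(ℰ(q,φ))·(w/φ_z) + R₃/φ_z`. -/
def R4Fun (l : ℂ) (q : OPS) (φ : FPS) : FPS :=
  fmul (d1 (Err l q φ)) (fdiv (wFun l q φ) (d1 φ)) + fdiv (R3Fun l q φ) (d1 φ)

/-- `φ = z + z̄ + O₃`. -/
def normalized (φ : FPS) : Prop :=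
  φ 0 0 = 0 ∧ φ 1 0 = 1 ∧ φ 0 1 = 1 ∧ φ 2 0 = 0 ∧ φ 1 1 = 0 ∧ φ 0 2 = 0

/-- The weighted norm `‖f‖_ρ = Σ_{j,k} |f_{j,k}| ρ^{j+k} ∈ [0,∞]`. -/
def wnorm (ρ : ℝ) (f : FPS) : ENNReal :=
  ∑' p : ℕ × ℕ, ENNReal.ofReal (‖f p.1 p.2‖ * ρ ^ (p.1 + p.2))

/-- `D(f) = Σ_{n≥1} n f_n (z z̄)^n` for a series in `z z̄`. -/
def Dop (f : FPS) : FPS := fun j k => if j = k then (j : ℂ) * f j k else 0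

/-- `D̄(f − f₀) = Σ_{n≥1} (f_n/n) (z z̄)^n` for a series in `z z̄`. -/
def Dbar (f : FPS) : FPS := fun j k => if j = k ∧ j ≠ 0 then f j k / (j : ℂ) else 0

/-- The constant part `f₀` of a series. -/
def constPart (f : FPS) : FPS := fun j k => if j = 0 ∧ k = 0 then f 0 0 else 0

/-- `ξ₀ = ((λ⁻¹+1)z + (λ+1)z̄)/2`. -/
def xi0 (l : ℂ) : FPS := fun a b =>
  if a = 1 ∧ b = 0 then (l⁻¹ + 1) / 2 else if a = 0 ∧ b = 1 then (l + 1) / 2 else 0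
/-! ### Bridge to `PowerSeries (PowerSeries ℂ)` -/

def toPS (f : FPS) : PowerSeries (PowerSeries ℂ) :=
  PowerSeries.mk fun j => PowerSeries.mk (f j)

lemma coeff_toPS (f : FPS) (j k : ℕ) :
    PowerSeries.coeff k (PowerSeries.coeff j (toPS f)) = f j k := by
  simp [toPS]

lemma toPS_fmul (f g : FPS) : toPS (fmul f g) = toPS f * toPS g := by
  apply PowerSeries.ext; intro j
  apply PowerSeries.ext; intro k
  rw [PowerSeries.coeff_mul, map_sum]
  rw [Finset.Nat.sum_antidiagonal_eq_sum_range_succ_mk]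
  have : ∀ a, PowerSeries.coeff k
      ((PowerSeries.coeff a (toPS f)) * (PowerSeries.coeff (j-a) (toPS g)))
      = ∑ b ∈ Finset.range (k+1), f a b * g (j-a) (k-b) := by
    intro a
    rw [PowerSeries.coeff_mul, Finset.Nat.sum_antidiagonal_eq_sum_range_succ_mk]
    simp [coeff_toPS]
  simp only [this, coeff_toPS, fmul]

lemma toPS_injective : Function.Injective toPS := by
  intro f g h
  funext j k
  have := congrArg (fun x => PowerSeries.coeff k (PowerSeries.coeff j x)) h
  simpa [coeff_toPS] using this

lemma toPS_one : toPS oneF = 1 := by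
  apply PowerSeries.ext; intro j
  apply PowerSeries.ext; intro k
  rw [coeff_toPS]
  rw [PowerSeries.coeff_one]
  split_ifs with hj
  · subst hj
    rw [PowerSeries.coeff_one]
    split_ifs with hk
    · subst hk; simp [oneF]
    · simp [oneF, hk]
  · simp [oneF, hj]

lemma toPS_fpow (f : FPS) (m : ℕ) : toPS (fpow f m) = toPS f ^ m := by
  induction m with
  | zero => simpa [fpow] using toPS_one
  | succ n ih => rw [fpow, toPS_fmul, ih, pow_succ]; ring

lemma toPS_add (f g : FPS) : toPS (f + g) = toPS f + toPS g := by
  apply PowerSeries.ext; intro j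
  apply PowerSeries.ext; intro k
  simp only [map_add, coeff_toPS]
  rfl

lemma fmul_comm (f g : FPS) : fmul f g = fmul g f := by
  apply toPS_injective
  rw [toPS_fmul, toPS_fmul, mul_comm]

/-- Binomial theorem for `fpow`. -/
lemma fpow_add_expand (f g : FPS) (M j k : ℕ) :
    fpow (f + g) M j k
      = ∑ m ∈ Finset.range (M+1), (M.choose m : ℂ) * fmul (fpow f m) (fpow g (M-m)) j k := by
  have h : toPS (fpow (f+g) M) = ∑ m ∈ Finset.range (M+1),
      (M.choose m : ℕ) • (toPS (fmul (fpow f m) (fpow g (M-m)))) := by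
    rw [toPS_fpow, toPS_add, add_pow]
    refine Finset.sum_congr rfl fun m _ => ?_
    rw [toPS_fmul, toPS_fpow, toPS_fpow]
    rw [nsmul_eq_mul]
    ring
  have := congrArg (fun x => PowerSeries.coeff k (PowerSeries.coeff j x)) h
  simp only [coeff_toPS, map_sum] at this
  rw [this]
  refine Finset.sum_congr rfl fun m _ => ?_
  rw [map_nsmul, map_nsmul, coeff_toPS]
  simp

/-! ### Support, parity, agreement lemmas -/

lemma fmul_supp {f g : FPS} {p q : ℕ}
    (hf : ∀ j k, j + k < p → f j k = 0) (hg : ∀ j k, j + k < q → g j k = 0) :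
    ∀ j k, j + k < p + q → fmul f g j k = 0 := by
  intro j k h
  unfold fmul
  apply Finset.sum_eq_zero; intro a ha
  apply Finset.sum_eq_zero; intro b hb
  simp only [Finset.mem_range] at ha hb
  by_cases h1 : a + b < p
  · rw [hf a b h1]; ring
  · rw [hg (j-a) (k-b) (by omega)]; ring

lemma fpow_supp {u : FPS} (hu : u 0 0 = 0) (m : ℕ) :
    ∀ j k, j + k < m → fpow u m j k = 0 := by
  induction m with
  | zero => intro j k h; omega
  | succ n ih =>
      intro j k h
      have h1 : ∀ j k, j + k < 1 → u j k = 0 := by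
        intro j k hjk
        have : j = 0 ∧ k = 0 := by omega
        rw [this.1, this.2, hu]
      exact fmul_supp h1 ih j k (by omega)

lemma fmul_parity {f g : FPS} {p q : ℕ}
    (hf : ∀ j k, (j + k) % 2 ≠ p % 2 → f j k = 0)
    (hg : ∀ j k, (j + k) % 2 ≠ q % 2 → g j k = 0) :
    ∀ j k, (j + k) % 2 ≠ (p + q) % 2 → fmul f g j k = 0 := by
  intro j k h
  unfold fmul
  apply Finset.sum_eq_zero; intro a ha
  apply Finset.sum_eq_zero; intro b hb
  simp only [Finset.mem_range] at ha hb
  by_cases h1 : (a + b) % 2 = p % 2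
  · rw [hg (j-a) (k-b) (by omega)]; ring
  · rw [hf a b h1]; ring

lemma fpow_parity {u : FPS} (hu : ∀ j k, (j + k) % 2 ≠ 1 → u j k = 0) (m : ℕ) :
    ∀ j k, (j + k) % 2 ≠ m % 2 → fpow u m j k = 0 := by
  induction m with
  | zero =>
      intro j k h
      show oneF j k = 0
      unfold oneF
      have : ¬(j = 0 ∧ k = 0) := by rintro ⟨rfl, rfl⟩; omega
      simp [this]
  | succ n ih =>
      intro j k h
      exact fmul_parity (p := 1) (q := n) hu ih j k (by omega)

lemma fmul_agree {f f' g g' : FPS} {D : ℕ}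
    (hf : ∀ j k, j + k ≤ D → f j k = f' j k) (hg : ∀ j k, j + k ≤ D → g j k = g' j k) :
    ∀ j k, j + k ≤ D → fmul f g j k = fmul f' g' j k := by
  intro j k h
  unfold fmul
  refine Finset.sum_congr rfl fun a ha => Finset.sum_congr rfl fun b hb => ?_
  simp only [Finset.mem_range] at ha hb
  rw [hf a b (by omega), hg (j-a) (k-b) (by omega)]

/-- If `u, u'` agree strictly below degree `D`, their `m`-th powers agree strictly below
degree `D + m - 1`. -/
lemma fpow_agree_pert {u u' : FPS} {D : ℕ} (hu : u 0 0 = 0) (hu' : u' 0 0 = 0)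
    (h : ∀ j k, j + k < D → u j k = u' j k) (m : ℕ) :
    ∀ j k, j + k < D + m - 1 → fpow u m j k = fpow u' m j k := by
  induction m with
  | zero => intro j k _; rfl
  | succ n ih =>
      intro j k hjk
      show fmul u (fpow u n) j k = fmul u' (fpow u' n) j k
      unfold fmul
      refine Finset.sum_congr rfl fun a ha => Finset.sum_congr rfl fun b hb => ?_
      simp only [Finset.mem_range] at ha hb
      by_cases hab : a + b = 0
      · have ha0 : a = 0 := by omega
        have hb0 : b = 0 := by omega
        rw [ha0, hb0, hu, hu']; ring
      · by_cases hlow : (j - a) + (k - b) < n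
        · rw [fpow_supp hu n _ _ hlow, fpow_supp hu' n _ _ hlow]; ring
        · rw [h a b (by omega), ih (j-a) (k-b) (by omega)]

/-- Key agreement: if `u,u'` and `v,v'` agree strictly below degree `d`, then for
`m + n ≥ 2` the product `u^m v^n` agrees at degree `d`. -/
lemma fmulpow_agree {u u' v v' : FPS} {d : ℕ}
    (hu : u 0 0 = 0) (hu' : u' 0 0 = 0) (hv : v 0 0 = 0) (hv' : v' 0 0 = 0)
    (hagu : ∀ j k, j + k < d → u j k = u' j k) (hagv : ∀ j k, j + k < d → v j k = v' j k)
    {m n : ℕ} (hmn : 2 ≤ m + n) :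
    ∀ j k, j + k = d → fmul (fpow u m) (fpow v n) j k = fmul (fpow u' m) (fpow v' n) j k := by
  intro j k hjk
  unfold fmul
  refine Finset.sum_congr rfl fun a ha => Finset.sum_congr rfl fun b hb => ?_
  simp only [Finset.mem_range] at ha hb
  by_cases h1 : a + b < m
  · rw [fpow_supp hu m _ _ h1, fpow_supp hu' m _ _ h1]; ring
  · by_cases h2 : (j - a) + (k - b) < n
    · rw [fpow_supp hv n _ _ h2, fpow_supp hv' n _ _ h2]; ring
    · have e1 : fpow u m a b = fpow u' m a b := by
        rcases Nat.eq_zero_or_pos m with hm | hm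
        · subst hm; rfl
        · exact fpow_agree_pert hu hu' hagu m a b (by omega)
      have e2 : fpow v n (j-a) (k-b) = fpow v' n (j-a) (k-b) := by
        rcases Nat.eq_zero_or_pos n with hn | hn
        · subst hn; rfl
        · exact fpow_agree_pert hv hv' hagv n (j-a) (k-b) (by omega)
      rw [e1, e2]

/-- Bottom-degree agreement through `fmul`. -/
lemma fmul_bot {f f' g g' : FPS} {p q : ℕ}
    (hf0 : ∀ j k, j + k < p → f j k = 0) (hf0' : ∀ j k, j + k < p → f' j k = 0)
    (hfa : ∀ j k, j + k = p → f j k = f' j k)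
    (hg0 : ∀ j k, j + k < q → g j k = 0) (hg0' : ∀ j k, j + k < q → g' j k = 0)
    (hga : ∀ j k, j + k = q → g j k = g' j k) :
    ∀ j k, j + k = p + q → fmul f g j k = fmul f' g' j k := by
  intro j k h
  unfold fmul
  refine Finset.sum_congr rfl fun a ha => Finset.sum_congr rfl fun b hb => ?_
  simp only [Finset.mem_range] at ha hb
  rcases lt_trichotomy (a + b) p with h1 | h1 | h1
  · rw [hf0 a b h1, hf0' a b h1]; ring
  · rw [hfa a b h1, hga (j-a) (k-b) (by omega)]
  · rw [hg0 (j-a) (k-b) (by omega), hg0' (j-a) (k-b) (by omega)]; ring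

/-- Bottom coefficients of `u^m` depend only on the linear part of `u`. -/
lemma fpow_bot {u u' : FPS} (hu : u 0 0 = 0) (hu' : u' 0 0 = 0)
    (h1 : ∀ j k, j + k = 1 → u j k = u' j k) (m : ℕ) :
    ∀ j k, j + k = m → fpow u m j k = fpow u' m j k := by
  induction m with
  | zero => intro j k _; rfl
  | succ n ih =>
      intro j k h
      show fmul u (fpow u n) j k = fmul u' (fpow u' n) j k
      have hz : ∀ j k : ℕ, j + k < 1 → u j k = 0 := by
        intro j k hjk
        have : j = 0 ∧ k = 0 := by omega
        rw [this.1, this.2, hu]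
      have hz' : ∀ j k : ℕ, j + k < 1 → u' j k = 0 := by
        intro j k hjk
        have : j = 0 ∧ k = 0 := by omega
        rw [this.1, this.2, hu']
      exact fmul_bot hz hz' h1 (fpow_supp hu n) (fpow_supp hu' n) ih j k (by omega)

/-! ### Linear series and their powers -/

/-- `lin x y = x z + y z̄`. -/
def lin (x y : ℂ) : FPS := fun j k =>
  if j = 1 ∧ k = 0 then x else if j = 0 ∧ k = 1 then y else 0

lemma double_sum_pair (F : ℕ → ℕ → ℂ) (j k a0 b0 : ℕ)
    (h : ∀ a b, a ≤ j → b ≤ k → ¬(a = a0 ∧ b = b0) → F a b = 0) :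
    ∑ a ∈ Finset.range (j+1), ∑ b ∈ Finset.range (k+1), F a b
      = if a0 ≤ j ∧ b0 ≤ k then F a0 b0 else 0 := by
  rw [← Finset.sum_product']
  by_cases hm : a0 ≤ j ∧ b0 ≤ k
  · rw [Finset.sum_eq_single (a0, b0)]
    · simp [hm]
    · intro p hp hne
      simp only [Finset.mem_product, Finset.mem_range] at hp
      exact h p.1 p.2 (by omega) (by omega) (by
        rintro ⟨e1, e2⟩; exact hne (Prod.ext e1 e2))
    · intro hnm
      exfalso
      apply hnm
      simp only [Finset.mem_product, Finset.mem_range]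
      omega
  · simp only [hm, if_false]
    apply Finset.sum_eq_zero
    intro p hp
    simp only [Finset.mem_product, Finset.mem_range] at hp
    exact h p.1 p.2 (by omega) (by omega) (by rintro ⟨e1, e2⟩; omega)

lemma fmul_lin (x y : ℂ) (g : FPS) (j k : ℕ) :
    fmul (lin x y) g j k
      = (if 1 ≤ j then x * g (j-1) k else 0) + (if 1 ≤ k then y * g j (k-1) else 0) := by
  unfold fmul
  have split : ∀ a b : ℕ, lin x y a b * g (j-a) (k-b)
      = (if a = 1 ∧ b = 0 then x * g (j-a) (k-b) else 0)
        + (if a = 0 ∧ b = 1 then y * g (j-a) (k-b) else 0) := by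
    intro a b
    unfold lin
    by_cases h1 : a = 1 ∧ b = 0
    · have : ¬(a = 0 ∧ b = 1) := by omega
      simp [h1, this]
    · by_cases h2 : a = 0 ∧ b = 1
      · simp [h1, h2]
      · simp [h1, h2]
  simp only [split, Finset.sum_add_distrib]
  rw [double_sum_pair _ j k 1 0 (by intro a b _ _ hne; simp [hne]),
      double_sum_pair _ j k 0 1 (by intro a b _ _ hne; simp [hne])]
  simp only [Nat.zero_le, and_true, true_and]
  congr 1

lemma lin_00 (x y : ℂ) : lin x y 0 0 = 0 := by simp [lin]

lemma fpow_lin (x y : ℂ) (m : ℕ) (j k : ℕ) :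
    fpow (lin x y) m j k
      = if j + k = m then (m.choose j : ℂ) * x ^ j * y ^ k else 0 := by
  induction m generalizing j k with
  | zero =>
      show oneF j k = _
      unfold oneF
      by_cases h : j = 0 ∧ k = 0
      · obtain ⟨rfl, rfl⟩ := h; norm_num
      · have h' : ¬(j + k = 0) := by omega
        simp only [if_neg h, if_neg h']
  | succ n ih =>
      show fmul (lin x y) (fpow (lin x y) n) j k = _
      rw [fmul_lin]
      simp only [ih]
      rcases j with _ | j' <;> rcases k with _ | k'
      · norm_num
      · rw [if_neg (by omega : ¬ (1:ℕ) ≤ 0), if_pos (by omega : 1 ≤ k'+1), zero_add]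
        simp only [Nat.succ_sub_one]
        by_cases hc : (0:ℕ) + k' = n
        · rw [if_pos hc, if_pos (by omega : 0 + (k'+1) = n+1)]
          rw [Nat.choose_zero_right, Nat.choose_zero_right]
          push_cast
          ring
        · rw [if_neg hc, if_neg (by omega : ¬(0 + (k'+1) = n+1)), mul_zero]
      · rw [if_pos (by omega : 1 ≤ j'+1), if_neg (by omega : ¬ (1:ℕ) ≤ 0), add_zero]
        simp only [Nat.succ_sub_one]
        by_cases hc : j' + 0 = n
        · rw [if_pos hc, if_pos (by omega : j'+1+0 = n+1)]
          have hj : j' = n := by omega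
          subst hj
          rw [Nat.choose_self, Nat.choose_self]
          push_cast
          ring
        · rw [if_neg hc, if_neg (by omega : ¬(j'+1+0 = n+1)), mul_zero]
      · rw [if_pos (by omega : 1 ≤ j'+1), if_pos (by omega : 1 ≤ k'+1)]
        simp only [Nat.succ_sub_one]
        by_cases hc : j' + (k'+1) = n
        · rw [if_pos hc, if_pos (by omega : j'+1+k' = n), if_pos (by omega : j'+1+(k'+1) = n+1)]
          rw [Nat.choose_succ_succ n j']
          push_cast
          ring
        · rw [if_neg hc, if_neg (by omega : ¬(j'+1+k' = n)),
              if_neg (by omega : ¬(j'+1+(k'+1) = n+1)), mul_zero, mul_zero, add_zero]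

/-! ### Closed forms for the generating function pieces -/

lemma halfSum_eq : halfSum = lin (1/2) (1/2) := rfl
lemma halfDiff_eq : halfDiff = lin (1/2) (-(1/2)) := rfl

/-- `QH q = q((t₁+t₂)/2)` as a series. -/
def QH (q : OPS) : FPS := substOne q halfSum
/-- `CH = cos((t₁-t₂)/2)` as a series. -/
def CH : FPS := substOne cosSeries halfDiff

lemma Sq_eq (q : OPS) : Sq q = fmul (QH q) CH := rfl

lemma substOne_lin_eq (q : OPS) (x y : ℂ) (j k : ℕ) :
    substOne q (lin x y) j k = q (j+k) * ((j+k).choose j : ℂ) * x^j * y^k := by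
  unfold substOne
  rw [Finset.sum_eq_single (j+k)]
  · rw [fpow_lin, if_pos rfl]; ring
  · intro m _ hm
    rw [fpow_lin, if_neg (by omega)]; ring
  · intro h
    exact absurd (Finset.mem_range.mpr (by omega)) h

lemma QH_eq (q : OPS) (j k : ℕ) :
    QH q j k = q (j+k) * ((j+k).choose j : ℂ) * (1/2)^j * (1/2)^k := by
  rw [QH, halfSum_eq, substOne_lin_eq]

lemma CH_eq (j k : ℕ) :
    CH j k = cosSeries (j+k) * ((j+k).choose j : ℂ) * (1/2)^j * (-(1/2))^k := by
  rw [CH, halfDiff_eq, substOne_lin_eq]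

lemma cosSeries_odd {n : ℕ} (h : n % 2 = 1) : cosSeries n = 0 := by
  unfold cosSeries
  rw [if_neg (by omega)]

lemma QH_parity (q : OPS) (hq : ∀ m, m % 2 = 1 → q m = 0) :
    ∀ j k, (j + k) % 2 ≠ 0 → QH q j k = 0 := by
  intro j k h
  rw [QH_eq, hq (j+k) (by omega)]; ring

lemma CH_parity : ∀ j k, (j + k) % 2 ≠ 0 → CH j k = 0 := by
  intro j k h
  rw [CH_eq, cosSeries_odd (by omega)]; ring

lemma Sq_parity (q : OPS) (hq : ∀ m, m % 2 = 1 → q m = 0) :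
    ∀ m n, (m + n) % 2 ≠ 0 → Sq q m n = 0 := by
  intro m n h
  rw [Sq_eq]
  exact fmul_parity (p := 0) (q := 0) (QH_parity q hq) CH_parity m n (by omega)

lemma QH_symm (q : OPS) (j k : ℕ) : QH q j k = QH q k j := by
  rw [QH_eq, QH_eq, Nat.add_comm k j]
  have : (j+k).choose j = (j+k).choose k := by
    rw [← Nat.choose_symm (by omega : j ≤ j + k)]
    congr 1
    omega
  rw [this]; ring

lemma CH_symm (j k : ℕ) : CH j k = CH k j := by
  by_cases h : (j + k) % 2 = 0
  · rw [CH_eq, CH_eq, Nat.add_comm k j]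
    have hc : (j+k).choose j = (j+k).choose k := by
      rw [← Nat.choose_symm (by omega : j ≤ j + k)]
      congr 1
      omega
    rw [hc]
    have e : ∀ m : ℕ, (-(1/2):ℂ)^m = (-1)^m * (1/2)^m := fun m => by
      rw [neg_pow]
    have hpm : (-1:ℂ)^k = (-1)^j := by
      have h1 : ((-1:ℂ))^k * ((-1:ℂ))^j = 1 := by
        rw [← pow_add]
        exact Even.neg_one_pow (Nat.even_iff.mpr (by omega))
      have h2 : ((-1:ℂ))^k * ((-1:ℂ))^k = 1 := by
        rw [← pow_add]
        exact Even.neg_one_pow (Nat.even_iff.mpr (by omega))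
      have h3 : (-1:ℂ)^k * (-1:ℂ)^k = (-1:ℂ)^k * (-1:ℂ)^j := by rw [h1, h2]
      exact mul_left_cancel₀ (pow_ne_zero k (by norm_num)) h3
    rw [e k, e j, hpm]
    ring
  · rw [CH_parity j k h, CH_parity k j (by omega)]

lemma fmul_symm_comp {f g : FPS} (hf : ∀ j k, f j k = f k j) (hg : ∀ j k, g j k = g k j) :
    ∀ j k, fmul f g j k = fmul f g k j := by
  intro j k
  unfold fmul
  rw [Finset.sum_comm]
  refine Finset.sum_congr rfl fun a _ => Finset.sum_congr rfl fun b _ => ?_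
  rw [hf b a, hg (k - a) (j - b)]

lemma Sq_symm (q : OPS) (m n : ℕ) : Sq q m n = Sq q n m := by
  rw [Sq_eq]
  exact fmul_symm_comp (QH_symm q) CH_symm m n

/-! ### The `q`-update and the series `Gd` -/

/-- Update `q` by adding `s` at index `d+1`. -/
def qup (q : OPS) (d : ℕ) (s : ℂ) : OPS := fun m => if m = d + 1 then q m + s else q m

/-- `Gd d = ((t₁+t₂)/2)^{d+1} · cos((t₁−t₂)/2)`, the derivative of `Sq` w.r.t. `q_{d+1}`. -/
def Gd (d : ℕ) : FPS := fmul (fpow halfSum (d+1)) CH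

lemma fpow_halfSum_supp (M : ℕ) : ∀ j k, j + k ≠ M → fpow halfSum M j k = 0 := by
  intro j k h
  rw [halfSum_eq, fpow_lin, if_neg h]

lemma QH_qup (q : OPS) (d : ℕ) (s : ℂ) (j k : ℕ) :
    QH (qup q d s) j k = QH q j k + s * fpow halfSum (d+1) j k := by
  rw [QH_eq, QH_eq, halfSum_eq, fpow_lin]
  unfold qup
  by_cases h : j + k = d + 1
  · rw [if_pos (by omega), if_pos h, h]; ring
  · rw [if_neg (by omega), if_neg h]; ring

lemma fmul_congr {f f' g g' : FPS} (hf : ∀ j k, f j k = f' j k) (hg : ∀ j k, g j k = g' j k) :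
    ∀ j k, fmul f g j k = fmul f' g' j k := by
  intro j k
  unfold fmul
  exact Finset.sum_congr rfl fun a _ => Finset.sum_congr rfl fun b _ => by rw [hf, hg]

lemma fmul_addsmul_left (f g h : FPS) (s : ℂ) :
    ∀ j k, fmul (fun a b => f a b + s * g a b) h j k = fmul f h j k + s * fmul g h j k := by
  intro j k
  unfold fmul
  rw [Finset.mul_sum, ← Finset.sum_add_distrib]
  refine Finset.sum_congr rfl fun a _ => ?_
  rw [Finset.mul_sum, ← Finset.sum_add_distrib]
  refine Finset.sum_congr rfl fun b _ => ?_
  ring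

lemma Sq_qup (q : OPS) (d : ℕ) (s : ℂ) (m n : ℕ) :
    Sq (qup q d s) m n = Sq q m n + s * Gd d m n := by
  rw [Sq_eq, Sq_eq, Gd]
  rw [fmul_congr (QH_qup q d s) (fun _ _ => rfl) m n]
  exact fmul_addsmul_left (QH q) (fpow halfSum (d+1)) CH s m n

lemma CH_00 : CH 0 0 = 1 := by
  rw [CH_eq]
  unfold cosSeries
  norm_num

lemma Gd_supp (d : ℕ) : ∀ m n, m + n < d + 1 → Gd d m n = 0 := by
  intro m n h
  exact fmul_supp (p := d+1) (q := 0)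
    (fun j k hjk => fpow_halfSum_supp (d+1) j k (by omega))
    (fun j k hjk => absurd hjk (by omega)) m n (by omega)

lemma Gd_top (d : ℕ) : ∀ m n, m + n = d + 1 → Gd d m n = ((d+1).choose m : ℂ) * (1/2)^(d+1) := by
  intro m n h
  unfold Gd fmul
  rw [double_sum_pair _ m n m n (by
    intro a b ha hb hne
    have : a + b ≠ d + 1 := by omega
    rw [fpow_halfSum_supp (d+1) a b this]
    ring)]
  rw [if_pos ⟨le_refl m, le_refl n⟩]
  simp only [Nat.sub_self]
  rw [CH_00, halfSum_eq, fpow_lin, if_pos h, mul_one]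
  have : (1/2:ℂ)^m * (1/2:ℂ)^n = (1/2:ℂ)^(d+1) := by
    rw [← pow_add, h]
  rw [mul_assoc, this]

/-! ### Small coefficients of `Sq` -/

lemma cosSeries_0 : cosSeries 0 = 1 := by unfold cosSeries; norm_num
lemma cosSeries_1 : cosSeries 1 = 0 := by unfold cosSeries; norm_num
lemma cosSeries_2 : cosSeries 2 = -(1/2) := by
  unfold cosSeries
  norm_num [Nat.factorial]

lemma Sq_11 (q : OPS) : Sq q 1 1 = q 2 / 2 + q 0 / 4 := by
  rw [Sq_eq]
  unfold fmul
  simp only [Finset.sum_range_succ, Finset.sum_range_zero, QH_eq, CH_eq]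
  norm_num [cosSeries_0, cosSeries_1, cosSeries_2]
  try ring

lemma Sq_20 (q : OPS) : Sq q 2 0 = q 2 / 4 - q 0 / 8 := by
  rw [Sq_eq]
  unfold fmul
  simp only [Finset.sum_range_succ, Finset.sum_range_zero, QH_eq, CH_eq]
  norm_num [cosSeries_0, cosSeries_1, cosSeries_2]
  try ring

lemma Sq_02 (q : OPS) : Sq q 0 2 = q 2 / 4 - q 0 / 8 := by
  rw [Sq_symm, Sq_20]

/-! ### `subst2` structure lemmas -/

lemma fmul_oneF_right (f : FPS) : fmul f oneF = f := by
  apply toPS_injective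
  rw [toPS_fmul, toPS_one, mul_one]

lemma fmul_oneF_left (f : FPS) : fmul oneF f = f := by
  apply toPS_injective
  rw [toPS_fmul, toPS_one, one_mul]

lemma fpow_one (f : FPS) : fpow f 1 = f := by
  show fmul f oneF = f
  exact fmul_oneF_right f

lemma subst2_congrF {F F' : FPS} (h : ∀ m n, F m n = F' m n) (u v : FPS) :
    ∀ j k, subst2 F u v j k = subst2 F' u v j k := by
  intro j k
  unfold subst2
  exact Finset.sum_congr rfl fun m _ => Finset.sum_congr rfl fun n _ => by rw [h]

lemma subst2_addF (F G : FPS) (s : ℂ) (u v : FPS) :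
    ∀ j k, subst2 (fun m n => F m n + s * G m n) u v j k
      = subst2 F u v j k + s * subst2 G u v j k := by
  intro j k
  unfold subst2
  rw [Finset.mul_sum, ← Finset.sum_add_distrib]
  refine Finset.sum_congr rfl fun m _ => ?_
  rw [Finset.mul_sum, ← Finset.sum_add_distrib]
  refine Finset.sum_congr rfl fun n _ => ?_
  ring

lemma lin_add (x1 y1 x2 y2 : ℂ) : lin x1 y1 + lin x2 y2 = lin (x1+x2) (y1+y2) := by
  funext j k
  show lin x1 y1 j k + lin x2 y2 j k = lin (x1+x2) (y1+y2) j k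
  unfold lin
  split_ifs <;> ring

lemma choose_id_d2 (d m n : ℕ) (h : m + n = d) :
    ((n:ℂ)+1) * (((d+1).choose m : ℕ) : ℂ) = ((d:ℂ)+1) * ((d.choose m : ℕ) : ℂ) := by
  have e1 : (d+1).choose m = (d+1).choose (n+1) := by
    rw [← Nat.choose_symm (by omega : m ≤ d+1)]
    congr 1
    omega
  have e2 : (d+1) * d.choose n = (d+1).choose (n+1) * (n+1) := Nat.add_one_mul_choose_eq d n
  have e3 : d.choose n = d.choose m := by
    rw [← Nat.choose_symm (by omega : n ≤ d)]
    congr 1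
    omega
  have : (n+1) * ((d+1).choose m) = (d+1) * d.choose m := by
    rw [e1, ← e3, Nat.mul_comm (n+1) _, ← e2]
  calc ((n:ℂ)+1) * (((d+1).choose m : ℕ) : ℂ) = (((n+1) * ((d+1).choose m) : ℕ) : ℂ) := by
        push_cast; ring
    _ = (((d+1) * d.choose m : ℕ) : ℂ) := by rw [this]
    _ = ((d:ℂ)+1) * ((d.choose m : ℕ) : ℂ) := by push_cast; ring

lemma choose_id_d1 (d m n : ℕ) (h : m + n = d) :
    ((m:ℂ)+1) * (((d+1).choose (m+1) : ℕ) : ℂ) = ((d:ℂ)+1) * ((d.choose m : ℕ) : ℂ) := by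
  have e2 : (d+1) * d.choose m = (d+1).choose (m+1) * (m+1) := Nat.add_one_mul_choose_eq d m
  have : (m+1) * ((d+1).choose (m+1)) = (d+1) * d.choose m := by
    rw [Nat.mul_comm (m+1) _, ← e2]
  calc ((m:ℂ)+1) * (((d+1).choose (m+1) : ℕ) : ℂ)
        = (((m+1) * ((d+1).choose (m+1)) : ℕ) : ℂ) := by push_cast; ring
    _ = (((d+1) * d.choose m : ℕ) : ℂ) := by rw [this]
    _ = ((d:ℂ)+1) * ((d.choose m : ℕ) : ℂ) := by push_cast; ring

/-- Evaluation of `subst2 F u v` at top degree `d` when `F` is supported on degrees `≥ d`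
with explicit top coefficients `(d+1)·C(d,m)/2^{d+1}`. -/
lemma subst2_top {d : ℕ} {F : FPS}
    (hF0 : ∀ m n, m + n < d → F m n = 0)
    (hFtop : ∀ m n, m + n = d → F m n = ((d:ℂ)+1) * (d.choose m : ℂ) * (1/2)^(d+1))
    {u v : FPS} (hu0 : u 0 0 = 0) (hv0 : v 0 0 = 0)
    {x1 y1 x2 y2 : ℂ}
    (hu1 : ∀ j k, j + k = 1 → u j k = lin x1 y1 j k)
    (hv1 : ∀ j k, j + k = 1 → v j k = lin x2 y2 j k) :
    ∀ j k, j + k = d → subst2 F u v j k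
      = ((d:ℂ)+1) * (1/2)^(d+1) * (d.choose j : ℂ) * (x1+x2)^j * (y1+y2)^k := by
  intro j k hjk
  unfold subst2
  have hrange : j + k + 1 = d + 1 := by omega
  rw [hrange]
  have inner : ∀ m ∈ Finset.range (d+1),
      (∑ n ∈ Finset.range (d+1), F m n * fmul (fpow u m) (fpow v n) j k)
        = ((d:ℂ)+1) * (d.choose m : ℂ) * (1/2)^(d+1) *
            fmul (fpow (lin x1 y1) m) (fpow (lin x2 y2) (d-m)) j k := by
    intro m hm
    rw [Finset.mem_range] at hm
    rw [Finset.sum_eq_single (d - m)]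
    · have hmn : m + (d - m) = d := by omega
      have e : fmul (fpow u m) (fpow v (d-m)) j k
          = fmul (fpow (lin x1 y1) m) (fpow (lin x2 y2) (d-m)) j k :=
        fmul_bot (fpow_supp hu0 m) (fpow_supp (lin_00 x1 y1) m)
          (fpow_bot hu0 (lin_00 x1 y1) hu1 m)
          (fpow_supp hv0 (d-m)) (fpow_supp (lin_00 x2 y2) (d-m))
          (fpow_bot hv0 (lin_00 x2 y2) hv1 (d-m)) j k (by omega)
      rw [hFtop m (d-m) hmn, e]
    · intro n hn hne
      rw [Finset.mem_range] at hn
      rcases lt_trichotomy (m + n) d with h1 | h1 | h1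
      · rw [hF0 m n h1]; ring
      · exact absurd h1 (by omega)
      · rw [fmul_supp (fpow_supp hu0 m) (fpow_supp hv0 n) j k (by omega)]; ring
    · intro habs
      exact absurd (Finset.mem_range.mpr (by omega)) habs
  rw [Finset.sum_congr rfl inner]
  have step : ∑ m ∈ Finset.range (d+1), ((d:ℂ)+1) * (d.choose m : ℂ) * (1/2)^(d+1) *
      fmul (fpow (lin x1 y1) m) (fpow (lin x2 y2) (d-m)) j k
      = ((d:ℂ)+1) * (1/2)^(d+1) * ∑ m ∈ Finset.range (d+1),
          (d.choose m : ℂ) * fmul (fpow (lin x1 y1) m) (fpow (lin x2 y2) (d-m)) j k := by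
    rw [Finset.mul_sum]
    exact Finset.sum_congr rfl fun m _ => by ring
  rw [step, ← fpow_add_expand, lin_add, fpow_lin, if_pos hjk]
  ring

/-- Perturbation of `subst2` at top degree. -/
lemma subst2_pert {d : ℕ} (hd : 1 ≤ d) (F : FPS) {u u' v v' : FPS}
    (hu0 : u 0 0 = 0) (hu0' : u' 0 0 = 0) (hv0 : v 0 0 = 0) (hv0' : v' 0 0 = 0)
    (hagu : ∀ j k, j + k < d → u j k = u' j k) (hagv : ∀ j k, j + k < d → v j k = v' j k) :
    ∀ j k, j + k = d → subst2 F u' v' j k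
      = subst2 F u v j k + F 1 0 * (u' j k - u j k) + F 0 1 * (v' j k - v j k) := by
  intro j k hjk
  unfold subst2
  have key : ∀ m ∈ Finset.range (j+k+1), ∀ n ∈ Finset.range (j+k+1),
      F m n * fmul (fpow u' m) (fpow v' n) j k
        = F m n * fmul (fpow u m) (fpow v n) j k
          + ((if m = 1 ∧ n = 0 then F 1 0 * (u' j k - u j k) else 0)
            + (if m = 0 ∧ n = 1 then F 0 1 * (v' j k - v j k) else 0)) := by
    intro m _ n _
    by_cases h10 : m = 1 ∧ n = 0
    · obtain ⟨rfl, rfl⟩ := h10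
      rw [if_pos ⟨rfl, rfl⟩, if_neg (by omega)]
      rw [fpow_one, fpow_one]
      show F 1 0 * fmul u' oneF j k = F 1 0 * fmul u oneF j k + (F 1 0 * (u' j k - u j k) + 0)
      rw [fmul_oneF_right, fmul_oneF_right]
      ring
    · by_cases h01 : m = 0 ∧ n = 1
      · obtain ⟨rfl, rfl⟩ := h01
        rw [if_neg (by omega), if_pos ⟨rfl, rfl⟩]
        rw [fpow_one, fpow_one]
        show F 0 1 * fmul oneF v' j k = F 0 1 * fmul oneF v j k + (0 + F 0 1 * (v' j k - v j k))
        rw [fmul_oneF_left, fmul_oneF_left]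
        ring
      · rw [if_neg h10, if_neg h01]
        by_cases h00 : m = 0 ∧ n = 0
        · obtain ⟨rfl, rfl⟩ := h00
          show F 0 0 * fmul oneF oneF j k = F 0 0 * fmul oneF oneF j k + (0 + 0)
          ring
        · have hmn : 2 ≤ m + n := by omega
          rw [fmulpow_agree hu0 hu0' hv0 hv0' hagu hagv hmn j k hjk]
          ring
  calc (∑ m ∈ Finset.range (j+k+1), ∑ n ∈ Finset.range (j+k+1),
        F m n * fmul (fpow u' m) (fpow v' n) j k)
      = (∑ m ∈ Finset.range (j+k+1), ∑ n ∈ Finset.range (j+k+1),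
          (F m n * fmul (fpow u m) (fpow v n) j k
            + ((if m = 1 ∧ n = 0 then F 1 0 * (u' j k - u j k) else 0)
              + (if m = 0 ∧ n = 1 then F 0 1 * (v' j k - v j k) else 0)))) := by
        exact Finset.sum_congr rfl fun m hm => Finset.sum_congr rfl fun n hn => key m hm n hn
    _ = (∑ m ∈ Finset.range (j+k+1), ∑ n ∈ Finset.range (j+k+1),
          F m n * fmul (fpow u m) (fpow v n) j k)
        + ((∑ m ∈ Finset.range (j+k+1), ∑ n ∈ Finset.range (j+k+1),
            (if m = 1 ∧ n = 0 then F 1 0 * (u' j k - u j k) else 0))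
          + (∑ m ∈ Finset.range (j+k+1), ∑ n ∈ Finset.range (j+k+1),
            (if m = 0 ∧ n = 1 then F 0 1 * (v' j k - v j k) else 0))) := by
        have hsplit : ∀ m : ℕ, (∑ n ∈ Finset.range (j+k+1),
            (F m n * fmul (fpow u m) (fpow v n) j k
              + ((if m = 1 ∧ n = 0 then F 1 0 * (u' j k - u j k) else 0)
                + (if m = 0 ∧ n = 1 then F 0 1 * (v' j k - v j k) else 0))))
            = (∑ n ∈ Finset.range (j+k+1), F m n * fmul (fpow u m) (fpow v n) j k)
              + ((∑ n ∈ Finset.range (j+k+1), (if m = 1 ∧ n = 0 then F 1 0 * (u' j k - u j k) else 0))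
                + (∑ n ∈ Finset.range (j+k+1), (if m = 0 ∧ n = 1 then F 0 1 * (v' j k - v j k) else 0))) := by
          intro m
          rw [Finset.sum_add_distrib, Finset.sum_add_distrib]
        rw [Finset.sum_congr rfl (fun m _ => hsplit m), Finset.sum_add_distrib,
          Finset.sum_add_distrib]
    _ = _ := by
        have e1 : (∑ m ∈ Finset.range (j+k+1), ∑ n ∈ Finset.range (j+k+1),
            (if m = 1 ∧ n = 0 then F 1 0 * (u' j k - u j k) else 0))
            = F 1 0 * (u' j k - u j k) := by
          have := double_sum_pair
            (fun m n => if m = 1 ∧ n = 0 then F 1 0 * (u' j k - u j k) else 0)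
            (j+k) (j+k) 1 0 (by intro a b _ _ hne; exact if_neg hne)
          rw [this, if_pos (show 1 ≤ j+k ∧ 0 ≤ j+k by omega)]
          simp
        have e2 : (∑ m ∈ Finset.range (j+k+1), ∑ n ∈ Finset.range (j+k+1),
            (if m = 0 ∧ n = 1 then F 0 1 * (v' j k - v j k) else 0))
            = F 0 1 * (v' j k - v j k) := by
          have := double_sum_pair
            (fun m n => if m = 0 ∧ n = 1 then F 0 1 * (v' j k - v j k) else 0)
            (j+k) (j+k) 0 1 (by intro a b _ _ hne; exact if_neg hne)
          rw [this, if_pos (show 0 ≤ j+k ∧ 1 ≤ j+k by omega)]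
          simp
        rw [e1, e2]
        ring

/-! ### `Err`-level lemmas -/

lemma Err_apply (l : ℂ) (q : OPS) (φ : FPS) (j k : ℕ) :
    Err l q φ j k = subst2 (d2 (Sq q)) (minus l φ) φ j k
      + subst2 (d1 (Sq q)) φ (plus l φ) j k := rfl

lemma minus_00 (l : ℂ) {φ : FPS} (h : φ 0 0 = 0) : minus l φ 0 0 = 0 := by
  unfold minus
  rw [h, mul_zero]

lemma plus_00 (l : ℂ) {φ : FPS} (h : φ 0 0 = 0) : plus l φ 0 0 = 0 := by
  unfold plus
  rw [h, mul_zero]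

lemma subst2_parity {F u v : FPS} (hF : ∀ m n, (m+n) % 2 = 0 → F m n = 0)
    (hu : ∀ a b, (a+b) % 2 = 0 → u a b = 0) (hv : ∀ a b, (a+b) % 2 = 0 → v a b = 0) :
    ∀ j k, (j+k) % 2 = 0 → subst2 F u v j k = 0 := by
  intro j k h
  unfold subst2
  apply Finset.sum_eq_zero; intro m _
  apply Finset.sum_eq_zero; intro n _
  by_cases hmn : (m+n) % 2 = 0
  · rw [hF m n hmn]; ring
  · have hu' : ∀ a b, (a+b) % 2 ≠ 1 → u a b = 0 := fun a b hab => hu a b (by omega)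
    have hv' : ∀ a b, (a+b) % 2 ≠ 1 → v a b = 0 := fun a b hab => hv a b (by omega)
    rw [fmul_parity (p := m) (q := n) (fpow_parity hu' m) (fpow_parity hv' n) j k (by omega)]
    ring

lemma Err_parity (l : ℂ) (q : OPS) (φ : FPS)
    (hq : ∀ m, m % 2 = 1 → q m = 0) (hφ : ∀ a b, (a+b) % 2 = 0 → φ a b = 0) :
    ∀ j k, (j+k) % 2 = 0 → Err l q φ j k = 0 := by
  intro j k h
  rw [Err_apply]
  have hu : ∀ a b, (a+b) % 2 = 0 → minus l φ a b = 0 := by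
    intro a b hab
    unfold minus
    rw [hφ a b hab, mul_zero]
  have hv : ∀ a b, (a+b) % 2 = 0 → plus l φ a b = 0 := by
    intro a b hab
    unfold plus
    rw [hφ a b hab, mul_zero]
  have hF1 : ∀ m n, (m+n) % 2 = 0 → d2 (Sq q) m n = 0 := by
    intro m n hmn
    show ((n+1:ℕ):ℂ) * Sq q m (n+1) = 0
    rw [Sq_parity q hq m (n+1) (by omega), mul_zero]
  have hF2 : ∀ m n, (m+n) % 2 = 0 → d1 (Sq q) m n = 0 := by
    intro m n hmn
    show ((m+1:ℕ):ℂ) * Sq q (m+1) n = 0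
    rw [Sq_parity q hq (m+1) n (by omega), mul_zero]
  rw [subst2_parity hF1 hu hφ j k h, subst2_parity hF2 hφ hv j k h, add_zero]

/-! ### Symmetry of `Err` -/

lemma fmul_swap (f g : FPS) (j k : ℕ) : fmul f g k j = fmul (swapI f) (swapI g) j k := by
  unfold fmul swapI
  rw [Finset.sum_comm]

lemma swapI_fmul (f g : FPS) : swapI (fmul f g) = fmul (swapI f) (swapI g) := by
  funext j k
  show fmul f g k j = _
  exact fmul_swap f g j k

lemma swapI_oneF : swapI oneF = oneF := by
  funext j k
  show oneF k j = oneF j k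
  unfold oneF
  by_cases h : j = 0 ∧ k = 0
  · rw [if_pos ⟨h.2, h.1⟩, if_pos h]
  · rw [if_neg (by omega), if_neg h]

lemma swapI_fpow (u : FPS) (m : ℕ) : swapI (fpow u m) = fpow (swapI u) m := by
  induction m with
  | zero => exact swapI_oneF
  | succ n ih =>
      show swapI (fmul u (fpow u n)) = fmul (swapI u) (fpow (swapI u) n)
      rw [swapI_fmul, ih]

lemma subst2_swap (F u v : FPS) (j k : ℕ) :
    subst2 F u v k j = subst2 F (swapI u) (swapI v) j k := by
  unfold subst2
  rw [Nat.add_comm k j]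
  refine Finset.sum_congr rfl fun m _ => Finset.sum_congr rfl fun n _ => ?_
  rw [fmul_swap, swapI_fpow, swapI_fpow]

lemma subst2_exch (F u v : FPS) (j k : ℕ) :
    subst2 F u v j k = subst2 (swapI F) v u j k := by
  unfold subst2
  rw [Finset.sum_comm]
  refine Finset.sum_congr rfl fun n _ => Finset.sum_congr rfl fun m _ => ?_
  rw [fmul_comm]
  rfl

lemma swapI_minus (l : ℂ) (f : FPS) : swapI (minus l f) = plus l (swapI f) := rfl

lemma swapI_plus (l : ℂ) (f : FPS) : swapI (plus l f) = minus l (swapI f) := rfl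

lemma Err_symm (l : ℂ) (q : OPS) (φ : FPS) (hφsym : ∀ a b, φ a b = φ b a) :
    ∀ j k, Err l q φ j k = Err l q φ k j := by
  have hswapφ : swapI φ = φ := by
    funext a b
    exact (hφsym a b).symm
  have hd2d1 : ∀ m n, swapI (d2 (Sq q)) m n = d1 (Sq q) m n := by
    intro m n
    show ((m+1:ℕ):ℂ) * Sq q n (m+1) = ((m+1:ℕ):ℂ) * Sq q (m+1) n
    rw [Sq_symm]
  have hd1d2 : ∀ m n, swapI (d1 (Sq q)) m n = d2 (Sq q) m n := by
    intro m n
    show ((n+1:ℕ):ℂ) * Sq q (n+1) m = ((n+1:ℕ):ℂ) * Sq q m (n+1)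
    rw [Sq_symm]
  intro j k
  rw [Err_apply, Err_apply]
  have e1 : subst2 (d2 (Sq q)) (minus l φ) φ k j = subst2 (d1 (Sq q)) φ (plus l φ) j k := by
    rw [subst2_swap, swapI_minus, hswapφ, subst2_exch,
      subst2_congrF hd2d1 φ (plus l φ) j k]
  have e2 : subst2 (d1 (Sq q)) φ (plus l φ) k j = subst2 (d2 (Sq q)) (minus l φ) φ j k := by
    rw [subst2_swap, swapI_plus, hswapφ, subst2_exch,
      subst2_congrF hd1d2 (minus l φ) φ j k]
  rw [e1, e2]
  ring

/-! ### Agreement of `Err` under truncation -/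

lemma fpow_agree_le {u u' : FPS} {D : ℕ} (hu : u 0 0 = 0) (hu' : u' 0 0 = 0)
    (h : ∀ a b, a + b ≤ D → u a b = u' a b) (m : ℕ) :
    ∀ j k, j + k ≤ D → fpow u m j k = fpow u' m j k := by
  rcases Nat.eq_zero_or_pos m with hm | hm
  · subst hm; intro j k _; rfl
  · intro j k hjk
    exact fpow_agree_pert (D := D + 1) hu hu' (fun a b hab => h a b (by omega)) m j k (by omega)

lemma Sq_agree {q q' : OPS} {M : ℕ} (h : ∀ m, m ≤ M → q m = q' m) :
    ∀ m n, m + n ≤ M → Sq q m n = Sq q' m n := by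
  intro m n hmn
  rw [Sq_eq, Sq_eq]
  refine fmul_agree (D := M) (fun a b hab => ?_) (fun a b hab => rfl) m n hmn
  rw [QH_eq, QH_eq, h (a+b) hab]

lemma subst2_agree {F F' u u' v v' : FPS} {D : ℕ}
    (hF : ∀ m n, m + n ≤ D → F m n = F' m n)
    (hu0 : u 0 0 = 0) (hu0' : u' 0 0 = 0) (hv0 : v 0 0 = 0) (hv0' : v' 0 0 = 0)
    (hu : ∀ a b, a + b ≤ D → u a b = u' a b) (hv : ∀ a b, a + b ≤ D → v a b = v' a b) :
    ∀ j k, j + k ≤ D → subst2 F u v j k = subst2 F' u' v' j k := by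
  intro j k hjk
  unfold subst2
  refine Finset.sum_congr rfl fun m _ => Finset.sum_congr rfl fun n _ => ?_
  by_cases hmn : m + n ≤ j + k
  · rw [hF m n (by omega)]
    rw [fmul_agree (D := D) (fpow_agree_le hu0 hu0' hu m) (fpow_agree_le hv0 hv0' hv n) j k hjk]
  · rw [fmul_supp (fpow_supp hu0 m) (fpow_supp hv0 n) j k (by omega),
      fmul_supp (fpow_supp hu0' m) (fpow_supp hv0' n) j k (by omega)]
    ring

lemma Err_agree (l : ℂ) {q q' : OPS} {φ φ' : FPS} {D : ℕ}
    (hφ0 : φ 0 0 = 0) (hφ0' : φ' 0 0 = 0)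
    (hq : ∀ m, m ≤ D + 1 → q m = q' m) (hφ : ∀ a b, a + b ≤ D → φ a b = φ' a b) :
    ∀ j k, j + k ≤ D → Err l q φ j k = Err l q' φ' j k := by
  intro j k hjk
  rw [Err_apply, Err_apply]
  have hminus : ∀ a b, a + b ≤ D → minus l φ a b = minus l φ' a b := by
    intro a b hab
    unfold minus
    rw [hφ a b hab]
  have hplus : ∀ a b, a + b ≤ D → plus l φ a b = plus l φ' a b := by
    intro a b hab
    unfold plus
    rw [hφ a b hab]
  have hF1 : ∀ m n, m + n ≤ D → d2 (Sq q) m n = d2 (Sq q') m n := by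
    intro m n hmn
    show ((n+1:ℕ):ℂ) * Sq q m (n+1) = ((n+1:ℕ):ℂ) * Sq q' m (n+1)
    rw [Sq_agree hq m (n+1) (by omega)]
  have hF2 : ∀ m n, m + n ≤ D → d1 (Sq q) m n = d1 (Sq q') m n := by
    intro m n hmn
    show ((m+1:ℕ):ℂ) * Sq q (m+1) n = ((m+1:ℕ):ℂ) * Sq q' (m+1) n
    rw [Sq_agree hq (m+1) n (by omega)]
  rw [subst2_agree hF1 (minus_00 l hφ0) (minus_00 l hφ0') hφ0 hφ0' hminus hφ j k hjk,
    subst2_agree hF2 hφ0 hφ0' (plus_00 l hφ0) (plus_00 l hφ0') hφ hplus j k hjk]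

/-! ### `Err` at degree 1 -/

lemma subst2_10 (F : FPS) {u v : FPS} (hu0 : u 0 0 = 0) (hv0 : v 0 0 = 0) :
    subst2 F u v 1 0 = F 1 0 * u 1 0 + F 0 1 * v 1 0 := by
  have hu' : ∀ a b : ℕ, a + b < 1 → u a b = 0 := by
    intro a b h
    have : a = 0 ∧ b = 0 := by omega
    rw [this.1, this.2, hu0]
  have hv' : ∀ a b : ℕ, a + b < 1 → v a b = 0 := by
    intro a b h
    have : a = 0 ∧ b = 0 := by omega
    rw [this.1, this.2, hv0]
  have h00 : fmul (fpow u 0) (fpow v 0) 1 0 = 0 := by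
    show fmul oneF oneF 1 0 = 0
    rw [fmul_oneF_left]
    unfold oneF
    norm_num
  have h10 : fmul (fpow u 1) (fpow v 0) 1 0 = u 1 0 := by
    rw [fpow_one]
    show fmul u oneF 1 0 = u 1 0
    rw [fmul_oneF_right]
  have h01 : fmul (fpow u 0) (fpow v 1) 1 0 = v 1 0 := by
    rw [fpow_one]
    show fmul oneF v 1 0 = v 1 0
    rw [fmul_oneF_left]
  have h11 : fmul (fpow u 1) (fpow v 1) 1 0 = 0 := by
    rw [fpow_one, fpow_one]
    exact fmul_supp (p := 1) (q := 1) hu' hv' 1 0 (by omega)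
  unfold subst2
  norm_num [Finset.sum_range_succ]
  rw [h00, h10, h01, h11]
  ring

lemma Err_deg1 (l : ℂ) (q : OPS) (φ : FPS)
    (hφ00 : φ 0 0 = 0) (hφ10 : φ 1 0 = 1) (hφ01 : φ 0 1 = 1) :
    Err l q φ 1 0 = Sq q 1 1 * (l + l⁻¹) + 2 * Sq q 0 2 + 2 * Sq q 2 0 := by
  rw [Err_apply]
  rw [subst2_10 _ (minus_00 l hφ00) hφ00, subst2_10 _ hφ00 (plus_00 l hφ00)]
  have e1 : minus l φ 1 0 = l⁻¹ := by
    unfold minus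
    rw [hφ10]
    norm_num
  have e2 : plus l φ 1 0 = l := by
    unfold plus
    rw [hφ10]
    norm_num
  have f1 : d2 (Sq q) 1 0 = Sq q 1 1 := by
    show ((0+1:ℕ):ℂ) * Sq q 1 (0+1) = Sq q 1 1
    norm_num
  have f2 : d2 (Sq q) 0 1 = 2 * Sq q 0 2 := by
    show ((1+1:ℕ):ℂ) * Sq q 0 (1+1) = 2 * Sq q 0 2
    norm_num
  have f3 : d1 (Sq q) 1 0 = 2 * Sq q 2 0 := by
    show ((1+1:ℕ):ℂ) * Sq q (1+1) 0 = 2 * Sq q 2 0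
    norm_num
  have f4 : d1 (Sq q) 0 1 = Sq q 1 1 := by
    show ((0+1:ℕ):ℂ) * Sq q (0+1) 1 = Sq q 1 1
    norm_num
  rw [e1, e2, f1, f2, f3, f4, hφ10]
  ring

/-! ### The key expansion of `Err` at top degree -/

lemma Err_expand (l : ℂ) (q : OPS) (s : ℂ) (d : ℕ) (hd : 1 ≤ d)
    (φ w : FPS) (hφ00 : φ 0 0 = 0) (hφ10 : φ 1 0 = 1) (hφ01 : φ 0 1 = 1)
    (hw : ∀ a b, a + b ≠ d → w a b = 0) (hw1 : d = 1 → ∀ a b, w a b = 0) :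
    ∀ j k, j + k = d →
      Err l (qup q d s) (fun a b => φ a b + w a b) j k
        = Err l q φ j k
          + (Sq q 1 1 * (l ^ ((k:ℤ) - (j:ℤ)) + l ^ ((j:ℤ) - (k:ℤ)))
              + 2 * Sq q 0 2 + 2 * Sq q 2 0) * w j k
          + s * (((d:ℂ)+1) * (1/2)^(d+1) * (d.choose j : ℂ) *
              ((l⁻¹+1)^j * (l+1)^k + (l+1)^j * (l⁻¹+1)^k)) := by
  intro j k hjk
  set Φ : FPS := fun a b => φ a b + w a b with hΦ
  have hΦab : ∀ a b, Φ a b = φ a b + w a b := fun a b => rfl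
  have hw00 : w 0 0 = 0 := hw 0 0 (by omega)
  have hw10 : w 1 0 = 0 := by
    by_cases h : d = 1
    · exact hw1 h 1 0
    · exact hw 1 0 (by omega)
  have hw01 : w 0 1 = 0 := by
    by_cases h : d = 1
    · exact hw1 h 0 1
    · exact hw 0 1 (by omega)
  have hΦ00 : Φ 0 0 = 0 := by rw [hΦab, hφ00, hw00, add_zero]
  have hΦ10 : Φ 1 0 = 1 := by rw [hΦab, hφ10, hw10, add_zero]
  have hΦ01 : Φ 0 1 = 1 := by rw [hΦab, hφ01, hw01, add_zero]
  have hagφ : ∀ a b, a + b < d → φ a b = Φ a b := by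
    intro a b h
    rw [hΦab, hw a b (by omega), add_zero]
  -- split the updated q
  have F1split : ∀ m n, d2 (Sq (qup q d s)) m n = d2 (Sq q) m n + s * d2 (Gd d) m n := by
    intro m n
    show ((n+1:ℕ):ℂ) * Sq (qup q d s) m (n+1)
      = ((n+1:ℕ):ℂ) * Sq q m (n+1) + s * (((n+1:ℕ):ℂ) * Gd d m (n+1))
    rw [Sq_qup]
    ring
  have F2split : ∀ m n, d1 (Sq (qup q d s)) m n = d1 (Sq q) m n + s * d1 (Gd d) m n := by
    intro m n
    show ((m+1:ℕ):ℂ) * Sq (qup q d s) (m+1) n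
      = ((m+1:ℕ):ℂ) * Sq q (m+1) n + s * (((m+1:ℕ):ℂ) * Gd d (m+1) n)
    rw [Sq_qup]
    ring
  -- top coefficients of the Gd-derivatives
  have hGd2_0 : ∀ m n, m + n < d → d2 (Gd d) m n = 0 := by
    intro m n h
    show ((n+1:ℕ):ℂ) * Gd d m (n+1) = 0
    rw [Gd_supp d m (n+1) (by omega), mul_zero]
  have hGd2_top : ∀ m n, m + n = d →
      d2 (Gd d) m n = ((d:ℂ)+1) * (d.choose m : ℂ) * (1/2)^(d+1) := by
    intro m n h
    show ((n+1:ℕ):ℂ) * Gd d m (n+1) = _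
    rw [Gd_top d m (n+1) (by omega)]
    have := choose_id_d2 d m n h
    push_cast at this ⊢
    linear_combination ((1:ℂ)/2)^(d+1) * this
  have hGd1_0 : ∀ m n, m + n < d → d1 (Gd d) m n = 0 := by
    intro m n h
    show ((m+1:ℕ):ℂ) * Gd d (m+1) n = 0
    rw [Gd_supp d (m+1) n (by omega), mul_zero]
  have hGd1_top : ∀ m n, m + n = d →
      d1 (Gd d) m n = ((d:ℂ)+1) * (d.choose m : ℂ) * (1/2)^(d+1) := by
    intro m n h
    show ((m+1:ℕ):ℂ) * Gd d (m+1) n = _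
    rw [Gd_top d (m+1) n (by omega)]
    have := choose_id_d1 d m n h
    push_cast at this ⊢
    linear_combination ((1:ℂ)/2)^(d+1) * this
  -- linear parts
  have hu1 : ∀ a b, a + b = 1 → minus l Φ a b = lin l⁻¹ l a b := by
    intro a b h
    have : (a = 1 ∧ b = 0) ∨ (a = 0 ∧ b = 1) := by omega
    rcases this with ⟨rfl, rfl⟩ | ⟨rfl, rfl⟩
    · show l ^ ((0:ℤ) - (1:ℤ)) * Φ 1 0 = _
      rw [hΦ10]
      norm_num [lin]
    · show l ^ ((1:ℤ) - (0:ℤ)) * Φ 0 1 = _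
      rw [hΦ01]
      norm_num [lin]
  have hv1 : ∀ a b, a + b = 1 → Φ a b = lin 1 1 a b := by
    intro a b h
    have : (a = 1 ∧ b = 0) ∨ (a = 0 ∧ b = 1) := by omega
    rcases this with ⟨rfl, rfl⟩ | ⟨rfl, rfl⟩
    · rw [hΦ10]; norm_num [lin]
    · rw [hΦ01]; norm_num [lin]
  have hp1 : ∀ a b, a + b = 1 → plus l Φ a b = lin l l⁻¹ a b := by
    intro a b h
    have : (a = 1 ∧ b = 0) ∨ (a = 0 ∧ b = 1) := by omega
    rcases this with ⟨rfl, rfl⟩ | ⟨rfl, rfl⟩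
    · show l ^ ((1:ℤ) - (0:ℤ)) * Φ 1 0 = _
      rw [hΦ10]
      norm_num [lin]
    · show l ^ ((0:ℤ) - (1:ℤ)) * Φ 0 1 = _
      rw [hΦ01]
      norm_num [lin]
  have hmΦ00 : minus l Φ 0 0 = 0 := minus_00 l hΦ00
  have hpΦ00 : plus l Φ 0 0 = 0 := plus_00 l hΦ00
  -- the s-terms
  have sterm1 : subst2 (d2 (Gd d)) (minus l Φ) Φ j k
      = ((d:ℂ)+1) * (1/2)^(d+1) * (d.choose j : ℂ) * (l⁻¹+1)^j * (l+1)^k :=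
    subst2_top hGd2_0 hGd2_top hmΦ00 hΦ00 hu1 hv1 j k hjk
  have sterm2 : subst2 (d1 (Gd d)) Φ (plus l Φ) j k
      = ((d:ℂ)+1) * (1/2)^(d+1) * (d.choose j : ℂ) * (1+l)^j * (1+l⁻¹)^k :=
    subst2_top hGd1_0 hGd1_top hΦ00 hpΦ00 hv1 hp1 j k hjk
  -- the w-perturbation terms
  have hagm : ∀ a b, a + b < d → minus l φ a b = minus l Φ a b := by
    intro a b h
    unfold minus
    rw [hagφ a b h]
  have hagp : ∀ a b, a + b < d → plus l φ a b = plus l Φ a b := by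
    intro a b h
    unfold plus
    rw [hagφ a b h]
  have pert1 : subst2 (d2 (Sq q)) (minus l Φ) Φ j k
      = subst2 (d2 (Sq q)) (minus l φ) φ j k
        + d2 (Sq q) 1 0 * (minus l Φ j k - minus l φ j k)
        + d2 (Sq q) 0 1 * (Φ j k - φ j k) :=
    subst2_pert hd (d2 (Sq q)) (minus_00 l hφ00) hmΦ00 hφ00 hΦ00 hagm hagφ j k hjk
  have pert2 : subst2 (d1 (Sq q)) Φ (plus l Φ) j k
      = subst2 (d1 (Sq q)) φ (plus l φ) j k
        + d1 (Sq q) 1 0 * (Φ j k - φ j k)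
        + d1 (Sq q) 0 1 * (plus l Φ j k - plus l φ j k) :=
    subst2_pert hd (d1 (Sq q)) hφ00 hΦ00 (plus_00 l hφ00) hpΦ00 hagφ hagp j k hjk
  -- difference values
  have dm : minus l Φ j k - minus l φ j k = l ^ ((k:ℤ) - (j:ℤ)) * w j k := by
    unfold minus
    rw [hΦab]
    ring
  have dp : plus l Φ j k - plus l φ j k = l ^ ((j:ℤ) - (k:ℤ)) * w j k := by
    unfold plus
    rw [hΦab]
    ring
  have dv : Φ j k - φ j k = w j k := by
    rw [hΦab]
    ring
  -- coefficient values
  have f1 : d2 (Sq q) 1 0 = Sq q 1 1 := by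
    show ((0+1:ℕ):ℂ) * Sq q 1 (0+1) = Sq q 1 1
    norm_num
  have f2 : d2 (Sq q) 0 1 = 2 * Sq q 0 2 := by
    show ((1+1:ℕ):ℂ) * Sq q 0 (1+1) = 2 * Sq q 0 2
    norm_num
  have f3 : d1 (Sq q) 1 0 = 2 * Sq q 2 0 := by
    show ((1+1:ℕ):ℂ) * Sq q (1+1) 0 = 2 * Sq q 2 0
    norm_num
  have f4 : d1 (Sq q) 0 1 = Sq q 1 1 := by
    show ((0+1:ℕ):ℂ) * Sq q (0+1) 1 = Sq q 1 1
    norm_num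
  -- assemble
  rw [Err_apply, Err_apply]
  rw [subst2_congrF F1split (minus l Φ) Φ j k, subst2_addF,
    subst2_congrF F2split Φ (plus l Φ) j k, subst2_addF]
  rw [sterm1, sterm2, pert1, pert2, dm, dp, dv, f1, f2, f3, f4]
  ring

/-! ### The small divisors -/

/-- `c_ν = (λ^ν + λ^{−ν} − λ − λ⁻¹)/(λ + λ⁻¹ + 2)`, the divisor for the `φ`-corrections. -/
def cC (l : ℂ) (ν : ℤ) : ℂ := (l ^ ν + l ^ (-ν) - l - l⁻¹) / (l + l⁻¹ + 2)

/-- The coefficient of `q_{d+1}` in `ℰ` at degree `d`. -/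
def Tco (l : ℂ) (d j k : ℕ) : ℂ :=
  ((d:ℂ)+1) * (1/2)^(d+1) * (d.choose j : ℂ) *
    ((l⁻¹+1)^j * (l+1)^k + (l+1)^j * (l⁻¹+1)^k)

section Main

variable {l : ℂ} (hl : ‖l‖ = 1) (hru : ∀ n : ℕ, 0 < n → l ^ n ≠ 1)

include hl in
lemma l_ne_zero : l ≠ 0 := by
  intro h
  rw [h] at hl
  simp at hl

include hru in
lemma l_zpow_ne_one : ∀ m : ℤ, m ≠ 0 → l ^ m ≠ 1 := by
  intro m hm
  rcases lt_trichotomy m 0 with hneg | h0 | hpos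
  · intro h
    have h1 : l ^ (-m) = 1 := by
      rw [zpow_neg, h, inv_one]
    have hnat : l ^ ((-m).toNat) = 1 := by
      rw [← zpow_natCast, Int.toNat_of_nonneg (by omega)]
      exact h1
    exact hru (-m).toNat (by omega) hnat
  · exact absurd h0 hm
  · intro h
    have hnat : l ^ (m.toNat) = 1 := by
      rw [← zpow_natCast, Int.toNat_of_nonneg (by omega)]
      exact h
    exact hru m.toNat (by omega) hnat

include hru in
lemma l_add_one_ne : l + 1 ≠ 0 := by
  intro h
  apply hru 2 (by norm_num)
  have : l = -1 := by linear_combination h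
  rw [this]
  ring

include hl hru in
lemma l_inv_add_one_ne : l⁻¹ + 1 ≠ 0 := by
  have hl0 := l_ne_zero hl
  intro h
  apply l_add_one_ne hru
  have : (l⁻¹ + 1) * l = l + 1 := by
    field_simp
    ring
  rw [h, zero_mul] at this
  exact this.symm

include hl hru in
lemma S2_ne : l + l⁻¹ + 2 ≠ 0 := by
  have hl0 := l_ne_zero hl
  intro h
  apply l_add_one_ne hru
  have h2 : (l + l⁻¹ + 2) * l = (l + 1)^2 := by
    field_simp
    ring
  rw [h, zero_mul] at h2
  exact pow_eq_zero_iff (by norm_num) |>.mp h2.symm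

include hl hru in
lemma cC_ne_zero (ν : ℤ) (h1 : ν ≠ 1) (h2 : ν ≠ -1) : cC l ν ≠ 0 := by
  have hl0 := l_ne_zero hl
  have hX : l ^ ν ≠ 0 := zpow_ne_zero ν hl0
  have hnum : l ^ ν + l ^ (-ν) - l - l⁻¹ = (l ^ ν)⁻¹ * (l ^ ν - l) * (l ^ ν - l⁻¹) := by
    rw [zpow_neg]
    field_simp
    ring
  have hf1 : l ^ ν - l ≠ 0 := by
    intro h
    apply l_zpow_ne_one hru (ν - 1) (by omega)
    have : l ^ ν = l := by linear_combination h
    rw [zpow_sub₀ hl0, this, zpow_one]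
    field_simp
  have hf2 : l ^ ν - l⁻¹ ≠ 0 := by
    intro h
    apply l_zpow_ne_one hru (ν + 1) (by omega)
    have : l ^ ν = l⁻¹ := by linear_combination h
    rw [zpow_add₀ hl0, this, zpow_one]
    field_simp
  unfold cC
  rw [hnum]
  exact div_ne_zero (by
    exact mul_ne_zero (mul_ne_zero (inv_ne_zero hX) hf1) hf2) (S2_ne hl hru)

lemma cC_symm (l : ℂ) (ν : ℤ) : cC l (-ν) = cC l ν := by
  unfold cC
  rw [neg_neg]
  ring_nf

include hl hru in
lemma Tco_ne_zero (n : ℕ) : Tco l (2*n+1) (n+1) n ≠ 0 := by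
  unfold Tco
  refine mul_ne_zero (mul_ne_zero (mul_ne_zero ?_ ?_) ?_) ?_
  · have e : (((2*n+1:ℕ):ℂ)+1) = ((2*n+2 : ℕ) : ℂ) := by push_cast; ring
    rw [e]
    exact Nat.cast_ne_zero.mpr (by omega)
  · exact pow_ne_zero _ (by norm_num)
  · have hp : 0 < (2*n+1).choose (n+1) := Nat.choose_pos (by omega)
    exact Nat.cast_ne_zero.mpr (by omega)
  · have e : (l⁻¹+1)^(n+1) * (l+1)^n + (l+1)^(n+1) * (l⁻¹+1)^n
        = (l⁻¹+1)^n * (l+1)^n * ((l⁻¹+1) + (l+1)) := by ring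
    rw [e]
    refine mul_ne_zero (mul_ne_zero ?_ ?_) ?_
    · exact pow_ne_zero _ (l_inv_add_one_ne hl hru)
    · exact pow_ne_zero _ (l_add_one_ne hru)
    · intro h
      apply S2_ne hl hru
      linear_combination h

lemma Tco_symm (l : ℂ) (d j k : ℕ) (h : j + k = d) : Tco l d j k = Tco l d k j := by
  unfold Tco
  have : d.choose j = d.choose k := by
    rw [← Nat.choose_symm (by omega : j ≤ d)]
    congr 1
    omega
  rw [this]
  ring

/-! ### The recursion -/

/-- The correction to `q_{2n+2}` at stage `n`. -/
def sv (l : ℂ) (p : OPS × FPS) (n : ℕ) : ℂ :=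
  - Err l p.1 p.2 (n+1) n / Tco l (2*n+1) (n+1) n

/-- The correction to `φ` at degree `2n+1`. -/
def wB (l : ℂ) (q : OPS) (φ : FPS) (n : ℕ) : FPS := fun j k =>
  if j + k = 2*n+1 ∧ j ≠ n + 1 ∧ k ≠ n + 1
    then - Err l q φ j k / cC l ((j:ℤ) - (k:ℤ)) else 0

/-- One step of the Newton-type iteration. -/
def stage (l : ℂ) (p : OPS × FPS) (n : ℕ) : OPS × FPS :=
  (qup p.1 (2*n+1) (sv l p n),
   fun a b => p.2 a b + wB l (qup p.1 (2*n+1) (sv l p n)) p.2 n a b)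

def iniQ : OPS := fun m => if m = 0 then 1 else 0
def iniPhi : FPS := fun j k => if (j = 1 ∧ k = 0) ∨ (j = 0 ∧ k = 1) then 1 else 0

/-- The sequence of approximate solutions. -/
def iter (l : ℂ) : ℕ → OPS × FPS
  | 0 => (iniQ, iniPhi)
  | n+1 => stage l (iter l n) n

lemma iter_succ (l : ℂ) (n : ℕ) : iter l (n+1) = stage l (iter l n) n := rfl

/-- The invariant carried through the induction. -/
def Good (l : ℂ) (n : ℕ) : Prop :=
  (iter l n).1 0 = 1 ∧ (∀ m, m % 2 = 1 → (iter l n).1 m = 0)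
  ∧ (iter l n).2 1 0 = 1 ∧ (iter l n).2 0 1 = 1
  ∧ (∀ a b, (a+b) % 2 = 0 → (iter l n).2 a b = 0)
  ∧ (∀ a b, (iter l n).2 a b = (iter l n).2 b a)
  ∧ (∀ j k, j + k < 2*n → Err l (iter l n).1 (iter l n).2 j k = 0)

include hl hru in
lemma good_all : ∀ n, Good l n := by
  intro n
  induction n with
  | zero =>
      refine ⟨rfl, ?_, ?_, ?_, ?_, ?_, ?_⟩
      · intro m hm
        show iniQ m = 0
        unfold iniQ
        rw [if_neg (by omega)]
      · show iniPhi 1 0 = 1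
        unfold iniPhi
        rw [if_pos (by omega)]
      · show iniPhi 0 1 = 1
        unfold iniPhi
        rw [if_pos (by omega)]
      · intro a b hab
        show iniPhi a b = 0
        unfold iniPhi
        rw [if_neg (by omega)]
      · intro a b
        show iniPhi a b = iniPhi b a
        unfold iniPhi
        by_cases h : (a = 1 ∧ b = 0) ∨ (a = 0 ∧ b = 1)
        · rw [if_pos h, if_pos (by omega)]
        · rw [if_neg h, if_neg (by omega)]
      · intro j k hjk
        omega
  | succ n G =>
      obtain ⟨hQ0, hQodd, hΦ10, hΦ01, hΦpar, hΦsym, hE⟩ := G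
      set P := iter l n with hP
      set s : ℂ := sv l P n with hs
      set Q' : OPS := qup P.1 (2*n+1) s with hQ'
      set W : FPS := wB l Q' P.2 n with hW
      have hΦ00 : P.2 0 0 = 0 := hΦpar 0 0 (by omega)
      have hWsupp : ∀ a b, a + b ≠ 2*n+1 → W a b = 0 := by
        intro a b hab
        rw [hW]
        unfold wB
        rw [if_neg (by omega)]
      have hW1 : 2*n+1 = 1 → ∀ a b, W a b = 0 := by
        intro h1 a b
        rw [hW]
        unfold wB
        rw [if_neg (by omega)]
      have hiter1 : (iter l (n+1)).1 = Q' := rfl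
      have hiter2 : (iter l (n+1)).2 = fun a b => P.2 a b + W a b := rfl
      have hQ'0 : Q' 0 = 1 := by
        rw [hQ']
        unfold qup
        rw [if_neg (by omega)]
        exact hQ0
      have hQ'odd : ∀ m, m % 2 = 1 → Q' m = 0 := by
        intro m hm
        rw [hQ']
        unfold qup
        rw [if_neg (by omega)]
        exact hQodd m hm
      have hΦ'10 : (fun a b => P.2 a b + W a b) 1 0 = 1 := by
        show P.2 1 0 + W 1 0 = 1
        have : W 1 0 = 0 := by
          rw [hW]; unfold wB; rw [if_neg (by omega)]
        rw [this, add_zero]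
        exact hΦ10
      have hΦ'01 : (fun a b => P.2 a b + W a b) 0 1 = 1 := by
        show P.2 0 1 + W 0 1 = 1
        have : W 0 1 = 0 := by
          rw [hW]; unfold wB; rw [if_neg (by omega)]
        rw [this, add_zero]
        exact hΦ01
      have hΦ'par : ∀ a b, (a+b) % 2 = 0 → P.2 a b + W a b = 0 := by
        intro a b hab
        rw [hΦpar a b hab, hWsupp a b (by omega), add_zero]
      have hΦ'00 : P.2 0 0 + W 0 0 = 0 := hΦ'par 0 0 (by omega)
      have hEsym := Err_symm l Q' P.2 hΦsym
      have hΦ'sym : ∀ a b, P.2 a b + W a b = P.2 b a + W b a := by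
        intro a b
        rw [hΦsym a b]
        congr 1
        rw [hW]
        unfold wB
        by_cases h : a + b = 2*n+1 ∧ a ≠ n + 1 ∧ b ≠ n + 1
        · rw [if_pos h, if_pos (by omega)]
          rw [hEsym a b]
          have : ((b:ℤ) - (a:ℤ)) = -((a:ℤ) - (b:ℤ)) := by ring
          rw [this, cC_symm]
        · rw [if_neg h, if_neg (by omega)]
      refine ⟨hQ'0, hQ'odd, hΦ'10, hΦ'01, hΦ'par, hΦ'sym, ?_⟩
      intro j k hjk
      rw [hiter1, hiter2]
      rcases lt_trichotomy (j + k) (2*n) with hlt | heq | hgt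
      · -- low degrees: agreement with the previous stage
        have hq : ∀ m, m ≤ (j + k) + 1 → P.1 m = Q' m := by
          intro m hm
          rw [hQ']
          unfold qup
          rw [if_neg (by omega)]
        have hphi : ∀ a b, a + b ≤ j + k → P.2 a b = (fun a b => P.2 a b + W a b) a b := by
          intro a b hab
          show P.2 a b = P.2 a b + W a b
          rw [hWsupp a b (by omega), add_zero]
        have hagree := Err_agree l (q := P.1) (q' := Q') (φ := P.2)
          (φ' := fun a b => P.2 a b + W a b) (D := j + k) hΦ00
          (show (fun a b => P.2 a b + W a b) 0 0 = 0 from hΦ'00)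
          hq hphi j k (le_refl _)
        rw [← hagree]
        exact hE j k hlt
      · -- even degree: parity
        exact Err_parity l Q' _ hQ'odd hΦ'par j k (by omega)
      · -- top degree `d = 2n+1`
        have hjkd : j + k = 2*n+1 := by omega
        have key := Err_expand l P.1 s (2*n+1) (by omega) P.2 W hΦ00 hΦ10 hΦ01
          hWsupp hW1 j k hjkd
        rw [← hQ'] at key
        have hTne := Tco_ne_zero hl hru n
        have key0 : Err l Q' P.2 j k
            = Err l P.1 P.2 j k + s * Tco l (2*n+1) j k := by
          have k0 := Err_expand l P.1 s (2*n+1) (by omega) P.2 (fun _ _ => 0) hΦ00 hΦ10 hΦ01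
            (fun a b _ => rfl) (fun _ a b => rfl) j k hjkd
          rw [← hQ'] at k0
          have e : (fun a b => P.2 a b + (fun (_ _ : ℕ) => (0:ℂ)) a b) = P.2 := by
            funext a b
            show P.2 a b + 0 = P.2 a b
            ring
          rw [e] at k0
          rw [k0]
          show _ = Err l P.1 P.2 j k + s * Tco l (2*n+1) j k
          unfold Tco
          ring
        by_cases hj : j = n + 1
        · -- the `q`-correction kills this coefficient
          have hk : k = n := by omega
          have hW0 : W j k = 0 := by
            rw [hW]; unfold wB; rw [if_neg (by omega)]
          rw [key, hW0]
          have hT : s * ((((2*n+1:ℕ):ℂ)+1) * (1/2)^(2*n+1+1) * (((2*n+1).choose j : ℕ) : ℂ) *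
              ((l⁻¹+1)^j * (l+1)^k + (l+1)^j * (l⁻¹+1)^k))
              = s * Tco l (2*n+1) j k := by
            unfold Tco
            ring
          rw [hT]
          have hEjk : Err l P.1 P.2 j k = Err l P.1 P.2 (n+1) n := by rw [hj, hk]
          have hTjk : Tco l (2*n+1) j k = Tco l (2*n+1) (n+1) n := by rw [hj, hk]
          rw [hEjk, hTjk, hs]
          simp only [sv]
          rw [div_mul_cancel₀ _ hTne]
          ring
        · by_cases hk : k = n + 1
          · have hj' : j = n := by omega
            have hW0 : W j k = 0 := by
              rw [hW]; unfold wB; rw [if_neg (by omega)]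
            rw [key, hW0]
            have hT : s * ((((2*n+1:ℕ):ℂ)+1) * (1/2)^(2*n+1+1) * (((2*n+1).choose j : ℕ) : ℂ) *
                ((l⁻¹+1)^j * (l+1)^k + (l+1)^j * (l⁻¹+1)^k))
                = s * Tco l (2*n+1) j k := by
              unfold Tco
              ring
            rw [hT]
            have hEjk : Err l P.1 P.2 j k = Err l P.1 P.2 (n+1) n := by
              rw [hk, hj']
              exact Err_symm l P.1 P.2 hΦsym n (n+1)
            have hTjk : Tco l (2*n+1) j k = Tco l (2*n+1) (n+1) n := by
              rw [hk, hj']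
              exact (Tco_symm l (2*n+1) (n+1) n (by omega)).symm
            rw [hEjk, hTjk, hs]
            simp only [sv]
            rw [div_mul_cancel₀ _ hTne]
            ring
          · -- generic coefficient: the `φ`-correction kills it
            have hn1 : 1 ≤ n := by omega
            have hE10 : Err l P.1 P.2 1 0 = 0 := hE 1 0 (by omega)
            have hDeg1 := Err_deg1 l P.1 P.2 hΦ00 hΦ10 hΦ01
            have hval : 2 * Sq P.1 0 2 + 2 * Sq P.1 2 0 = 2 * Sq P.1 1 1 - P.1 0 := by
              rw [Sq_11, Sq_20, Sq_02]
              ring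
            have halpha : Sq P.1 1 1 * (l + l⁻¹ + 2) = 1 := by
              rw [hE10] at hDeg1
              rw [← hQ0]
              linear_combination -hDeg1 - hval
            have hcoef : Sq P.1 1 1 * (l ^ ((k:ℤ) - (j:ℤ)) + l ^ ((j:ℤ) - (k:ℤ)))
                + 2 * Sq P.1 0 2 + 2 * Sq P.1 2 0 = cC l ((j:ℤ) - (k:ℤ)) := by
              unfold cC
              have hS2 := S2_ne hl hru
              rw [eq_div_iff hS2]
              have e : l ^ (-((j:ℤ) - (k:ℤ))) = l ^ ((k:ℤ) - (j:ℤ)) := by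
                congr 1
                ring
              rw [e]
              linear_combination (l ^ ((k:ℤ) - (j:ℤ)) + l ^ ((j:ℤ) - (k:ℤ))) * halpha
                + (l + l⁻¹ + 2) * hval - (l + l⁻¹ + 2) * hQ0 + 2 * halpha
            have hcne : cC l ((j:ℤ) - (k:ℤ)) ≠ 0 := by
              apply cC_ne_zero hl hru
              · omega
              · omega
            have hWval : W j k = - Err l Q' P.2 j k / cC l ((j:ℤ) - (k:ℤ)) := by
              rw [hW]
              unfold wB
              rw [if_pos ⟨by omega, hj, hk⟩]
            have hT : s * ((((2*n+1:ℕ):ℂ)+1) * (1/2)^(2*n+1+1) * (((2*n+1).choose j : ℕ) : ℂ) *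
                ((l⁻¹+1)^j * (l+1)^k + (l+1)^j * (l⁻¹+1)^k))
                = s * Tco l (2*n+1) j k := by
              unfold Tco
              ring
            rw [key, hcoef, hWval, hT, key0]
            field_simp
            ring

/-! ### Stability of the iteration -/

lemma iter_fst_stable (l : ℂ) (n m : ℕ) (h : m ≠ 2*n+2) :
    (iter l (n+1)).1 m = (iter l n).1 m := by
  show qup (iter l n).1 (2*n+1) _ m = _
  unfold qup
  rw [if_neg (by omega)]

lemma iter_snd_stable (l : ℂ) (n a b : ℕ) (h : a + b ≠ 2*n+1) :
    (iter l (n+1)).2 a b = (iter l n).2 a b := by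
  show (iter l n).2 a b + wB l _ (iter l n).2 n a b = _
  unfold wB
  rw [if_neg (by omega), add_zero]

lemma iter_fst_ge (l : ℂ) (n N m : ℕ) (hn : n ≤ N) (hm : m ≤ 2*n+1) :
    (iter l N).1 m = (iter l n).1 m := by
  induction N with
  | zero =>
      have : n = 0 := by omega
      rw [this]
  | succ N ih =>
      by_cases h : n = N + 1
      · rw [h]
      · rw [iter_fst_stable l N m (by omega)]
        exact ih (by omega)

lemma iter_snd_ge (l : ℂ) (n N a b : ℕ) (hn : n ≤ N) (hab : a + b ≤ 2*n) :
    (iter l N).2 a b = (iter l n).2 a b := by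
  induction N with
  | zero =>
      have : n = 0 := by omega
      rw [this]
  | succ N ih =>
      by_cases h : n = N + 1
      · rw [h]
      · rw [iter_snd_stable l N a b (by omega)]
        exact ih (by omega)

end Main

/-- (Treschev) If `λ` is on the unit circle and not a root of unity, then
there exist an even formal series `q` with `q₀ = 1` and a symmetric normalized odd series
`φ = z + z̄ + O₃` solving `ℰ(q,φ) = 0` formally. -/
theorem treschev_formal_solution
    (l : ℂ) (hl : ‖l‖ = 1) (hru : ∀ n : ℕ, 0 < n → l ^ n ≠ 1) :
    ∃ q : OPS, ∃ φ : FPS,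
      q 0 = 1 ∧ (∀ m : ℕ, Odd m → q m = 0) ∧
      (∀ j k : ℕ, Even (j + k) → φ j k = 0) ∧
      (∀ j k : ℕ, φ j k = φ k j) ∧
      φ 1 0 = 1 ∧ φ 0 1 = 1 ∧
      Err l q φ = 0 := by
  have G : ∀ n, Good l n := good_all hl hru
  refine ⟨fun m => (iter l m).1 m, fun j k => (iter l (j+k)).2 j k,
    ?_, ?_, ?_, ?_, ?_, ?_, ?_⟩
  · exact (G 0).1
  · intro m hm
    exact (G m).2.1 m (Nat.odd_iff.mp hm)
  · intro j k h
    exact (G (j+k)).2.2.2.2.1 j k (Nat.even_iff.mp h)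
  · intro j k
    show (iter l (j+k)).2 j k = (iter l (k+j)).2 k j
    rw [Nat.add_comm k j]
    exact (G (j+k)).2.2.2.2.2.1 j k
  · exact (G 1).2.2.1
  · exact (G 1).2.2.2.1
  · funext j k
    show Err l _ _ j k = 0
    obtain ⟨hQ0, hQodd, hΦ10, hΦ01, hΦpar, hΦsym, hE⟩ := G (j+k+1)
    have hq : ∀ m, m ≤ (j+k) + 1 → (fun m => (iter l m).1 m) m = (iter l (j+k+1)).1 m := by
      intro m hm
      exact (iter_fst_ge l m (j+k+1) m hm (by omega)).symm
    have hφ : ∀ a b, a + b ≤ j+k →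
        (fun j k => (iter l (j+k)).2 j k) a b = (iter l (j+k+1)).2 a b := by
      intro a b hab
      exact (iter_snd_ge l (a+b) (j+k+1) a b (by omega) (by omega)).symm
    have h00 : (fun j k => (iter l (j+k)).2 j k) 0 0 = 0 :=
      (G 0).2.2.2.2.1 0 0 (by omega)
    have h00' : (iter l (j+k+1)).2 0 0 = 0 := hΦpar 0 0 (by omega)
    rw [Err_agree l (q := fun m => (iter l m).1 m) (q' := (iter l (j+k+1)).1)
      (φ := fun a b => (iter l (a+b)).2 a b) (φ' := (iter l (j+k+1)).2) (D := j + k)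
      h00 h00' hq hφ j k (le_refl _)]
    exact hE j k (by omega)

end Treschev

end
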